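/- arXiv:math/0212414 — 2 statements merged into one kernel-verified Lean document; each statement's English description precedes it below -/
import Mathlib

section
/- One step of the perturbed (adaptive) Richardson iteration: in the setting of the Richardson iteration, suppose ε ≥ 0 and that for some n ≥ 1 there are elements V, W ∈ H with ‖F − V‖ ≤ ε and ‖A U^{n−1} − W‖ ≤ ε, and Uⁿ = U^{n−1} + τ(V − W). Then ‖U − Uⁿ‖ ≤ ρ ‖U − U^{n−1}‖ + 2τε. -/
open scoped RealInnerProductSpace

lemma sym_quadform_norm_bound
    {H : Type*} [NormedAddCommGroup H] [InnerProductSpace ℝ H]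
    (B : H →L[ℝ] H) (hB : ∀ u v : H, ⟪B u, v⟫ = ⟪u, B v⟫)
    (ρ : ℝ) (h : ∀ v : H, |⟪B v, v⟫| ≤ ρ * ‖v‖ ^ 2) (e : H) :
    ‖B e‖ ≤ ρ * ‖e‖ := by
  by_cases he0 : e = 0
  · simp [he0]
  have he : 0 < ‖e‖ := norm_pos_iff.mpr he0
  have he2 : 0 < ‖e‖ ^ 2 := by positivity
  have hρ : 0 ≤ ρ := by nlinarith [h e, abs_nonneg ⟪B e, e⟫]
  have key : ∀ f : H, ⟪B e, f⟫ ≤ (ρ / 2) * (‖e‖ ^ 2 + ‖f‖ ^ 2) := by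
    intro f
    have h1 := (abs_le.mp (h (e + f))).2
    have h2 := (abs_le.mp (h (e - f))).1
    have hc : ⟪B f, e⟫ = ⟪B e, f⟫ := by rw [hB f e, real_inner_comm]
    have hpol : ⟪B (e + f), e + f⟫ - ⟪B (e - f), e - f⟫ = 4 * ⟪B e, f⟫ := by
      simp only [map_add, map_sub, inner_add_left, inner_add_right,
        inner_sub_left, inner_sub_right]
      linarith
    have hpar : ‖e + f‖ ^ 2 + ‖e - f‖ ^ 2 = 2 * (‖e‖ ^ 2 + ‖f‖ ^ 2) := by
      have ha := norm_add_sq_real e f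
      have hs := norm_sub_sq_real e f
      linarith
    nlinarith
  by_cases hBe : ‖B e‖ = 0
  · rw [hBe]; positivity
  · have hBe' : 0 < ‖B e‖ := lt_of_le_of_ne (norm_nonneg _) (Ne.symm hBe)
    have hk := key ((‖e‖ / ‖B e‖) • B e)
    rw [real_inner_smul_right, real_inner_self_eq_norm_sq, norm_smul] at hk
    have hne : ‖(‖e‖ / ‖B e‖)‖ = ‖e‖ / ‖B e‖ := by
      rw [Real.norm_eq_abs, abs_of_nonneg]; positivity
    rw [hne] at hk
    have hq : (‖e‖ / ‖B e‖ * ‖B e‖) ^ 2 = ‖e‖ ^ 2 := by field_simp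
    rw [hq] at hk
    have heq : ‖e‖ / ‖B e‖ * ‖B e‖ ^ 2 = ‖e‖ * ‖B e‖ := by
      field_simp
    rw [heq] at hk
    nlinarith

/-- One step of the perturbed (adaptive) Richardson iteration: in the
Richardson setting, if `‖F - V‖ ≤ ε`, `‖A U^{n-1} - W‖ ≤ ε` and
`Uⁿ = U^{n-1} + τ(V - W)`, then `‖U - Uⁿ‖ ≤ ρ ‖U - U^{n-1}‖ + 2τε`. -/
theorem perturbed_richardson_step
    {H : Type*} [NormedAddCommGroup H] [InnerProductSpace ℝ H] [CompleteSpace H]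
    (A : H →L[ℝ] H) (hsa : ∀ u v : H, ⟪A u, v⟫ = ⟪u, A v⟫)
    (lmin lmax : ℝ) (hlmin : 0 < lmin) (hminmax : lmin ≤ lmax)
    (hcoer : ∀ v : H, lmin * ‖v‖ ^ 2 ≤ ⟪A v, v⟫)
    (hbound : ∀ v : H, ⟪A v, v⟫ ≤ lmax * ‖v‖ ^ 2)
    (F U : H) (hAU : A U = F)
    (τ : ℝ) (hτ0 : 0 < τ) (hτ : τ < 2 / lmax)
    (ρ : ℝ) (hρ : ρ = max (1 - τ * lmin) (τ * lmax - 1))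
    (ε : ℝ) (hε : 0 ≤ ε)
    (Uprev Un V W : H)
    (hV : ‖F - V‖ ≤ ε) (hW : ‖A Uprev - W‖ ≤ ε)
    (hUn : Un = Uprev + τ • (V - W)) :
    ‖U - Un‖ ≤ ρ * ‖U - Uprev‖ + 2 * τ * ε := by
  set B : H →L[ℝ] H := ContinuousLinearMap.id ℝ H - τ • A with hBdef
  have hBapp : ∀ v : H, B v = v - τ • A v := fun v => rfl
  have hBsym : ∀ u v : H, ⟪B u, v⟫ = ⟪u, B v⟫ := by
    intro u v
    simp only [hBapp, inner_sub_left, inner_sub_right, real_inner_smul_left,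
      real_inner_smul_right, hsa u v]
  have hq : ∀ v : H, |⟪B v, v⟫| ≤ ρ * ‖v‖ ^ 2 := by
    intro v
    have hBv : ⟪B v, v⟫ = ‖v‖ ^ 2 - τ * ⟪A v, v⟫ := by
      simp [hBapp, inner_sub_left, real_inner_smul_left, real_inner_self_eq_norm_sq]
    have hm1 : 1 - τ * lmin ≤ ρ := hρ ▸ le_max_left _ _
    have hm2 : τ * lmax - 1 ≤ ρ := hρ ▸ le_max_right _ _
    have hc := mul_le_mul_of_nonneg_left (hcoer v) hτ0.le
    have hb := mul_le_mul_of_nonneg_left (hbound v) hτ0.le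
    rw [hBv, abs_le]
    constructor <;> nlinarith [sq_nonneg ‖v‖]
  have hkey := sym_quadform_norm_bound B hBsym ρ hq (U - Uprev)
  have hAe : A (U - Uprev) = F - A Uprev := by rw [map_sub, hAU]
  have hdec : U - Un = B (U - Uprev) + τ • ((F - V) - (A Uprev - W)) := by
    rw [hBapp, hAe, hUn]
    module
  have hn : ‖(F - V) - (A Uprev - W)‖ ≤ 2 * ε :=
    (norm_sub_le _ _).trans (by linarith)
  calc ‖U - Un‖ ≤ ‖B (U - Uprev)‖ + ‖τ • ((F - V) - (A Uprev - W))‖ := by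
        rw [hdec]; exact norm_add_le _ _
    _ ≤ ρ * ‖U - Uprev‖ + τ * (2 * ε) := by
        rw [norm_smul, Real.norm_eq_abs, abs_of_pos hτ0]
        exact add_le_add hkey (mul_le_mul_of_nonneg_left hn hτ0.le)
    _ = ρ * ‖U - Uprev‖ + 2 * τ * ε := by ring
end

section
/- Dual norm equivalence induced by a Riesz basis: let X be a real Banach space, I a countable index type, and T : ℓ²(I) → X a bounded linear bijection such that c‖U‖ ≤ ‖T U‖ ≤ C‖U‖ for all U ∈ ℓ²(I), where 0 < c ≤ C. Set ψ_λ := T(e_λ), where (e_λ) is the standard orthonormal basis of ℓ²(I). Then for every continuous linear functional f ∈ X', the family (f(ψ_λ))_{λ∈I} is square-summable and c‖f‖_{X'} ≤ ( Σ_λ |f(ψ_λ)|² )^{1/2} ≤ C‖f‖_{X'}. -/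
/-- Dual norm equivalence induced by a Riesz basis: if
`T : ℓ²(I) → X` is a bounded linear bijection with `c‖U‖ ≤ ‖T U‖ ≤ C‖U‖`
(`0 < c ≤ C`) and `ψ_λ = T e_λ` for the standard basis `(e_λ)` of `ℓ²(I)`, then
for every `f ∈ X'` the family `(f(ψ_λ))` is square-summable and
`c‖f‖_{X'} ≤ (Σ_λ |f(ψ_λ)|²)^{1/2} ≤ C‖f‖_{X'}`. -/
theorem riesz_basis_dual_norm_equivalence
    {X : Type*} [NormedAddCommGroup X] [NormedSpace ℝ X] [CompleteSpace X]
    {I : Type*} [Countable I] [DecidableEq I]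
    (T : lp (fun _ : I => ℝ) 2 →L[ℝ] X) (hbij : Function.Bijective T)
    (c C : ℝ) (hc : 0 < c) (hcC : c ≤ C)
    (hlow : ∀ U : lp (fun _ : I => ℝ) 2, c * ‖U‖ ≤ ‖T U‖)
    (hup : ∀ U : lp (fun _ : I => ℝ) 2, ‖T U‖ ≤ C * ‖U‖)
    (f : X →L[ℝ] ℝ) :
    Summable (fun l : I => (f (T (lp.single 2 l 1))) ^ 2) ∧
    c * ‖f‖ ≤ Real.sqrt (∑' l : I, (f (T (lp.single 2 l 1))) ^ 2) ∧
    Real.sqrt (∑' l : I, (f (T (lp.single 2 l 1))) ^ 2) ≤ C * ‖f‖ := by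
  set H := lp (fun _ : I => ℝ) 2
  set g : H →L[ℝ] ℝ := f.comp T with hg
  set V : H := (InnerProductSpace.toDual ℝ H).symm g with hV
  have hVapp : ∀ U : H, g U = (inner ℝ V U : ℝ) := by
    intro U
    rw [hV]
    simp [InnerProductSpace.toDual_symm_apply]
  have hcoord : ∀ l : I, f (T (lp.single 2 l 1)) = V l := by
    intro l
    have := hVapp (lp.single 2 l 1)
    rw [lp.inner_single_right] at this
    simpa [g] using this
  have hVnorm : ‖V‖ = ‖g‖ := by
    rw [hV]; exact LinearIsometryEquiv.norm_map _ g
  have h2 : (0:ℝ) < (2 : ENNReal).toReal := by norm_num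
  -- summability
  have hsum : Summable fun l : I => ‖V l‖ ^ (2 : ENNReal).toReal := by
    have := lp.memℓp V
    rwa [memℓp_gen_iff h2] at this
  have hsum' : Summable fun l : I => (f (T (lp.single 2 l 1))) ^ 2 := by
    refine hsum.congr fun l => ?_
    rw [hcoord l]
    norm_num [Real.rpow_two, sq_abs]
  -- norm of V equals sqrt of tsum
  have hnorm_eq : Real.sqrt (∑' l : I, (f (T (lp.single 2 l 1))) ^ 2) = ‖V‖ := by
    have h := lp.norm_rpow_eq_tsum h2 V
    have htsum : (∑' l : I, (f (T (lp.single 2 l 1))) ^ 2)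
        = ∑' l : I, ‖V l‖ ^ (2 : ENNReal).toReal := by
      refine tsum_congr fun l => ?_
      rw [hcoord l]
      norm_num [Real.rpow_two, sq_abs]
    rw [htsum, ← h]
    have : ‖V‖ ^ (2 : ENNReal).toReal = ‖V‖ ^ (2:ℕ) := by
      norm_num [Real.rpow_two]
    rw [this]
    exact Real.sqrt_sq (norm_nonneg V)
  refine ⟨hsum', ?_, ?_⟩
  · -- c‖f‖ ≤ ‖g‖
    rw [hnorm_eq, hVnorm]
    have hfle : ‖f‖ ≤ ‖g‖ / c := by
      apply ContinuousLinearMap.opNorm_le_bound _ (div_nonneg (norm_nonneg g) hc.le)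
      intro x
      obtain ⟨U, rfl⟩ := hbij.2 x
      have h1 : ‖g U‖ ≤ ‖g‖ * ‖U‖ := g.le_opNorm U
      have h2' : ‖U‖ ≤ ‖T U‖ / c := (le_div_iff₀ hc).2 (by linarith [hlow U])
      calc ‖f (T U)‖ = ‖g U‖ := rfl
        _ ≤ ‖g‖ * ‖U‖ := h1
        _ ≤ ‖g‖ * (‖T U‖ / c) := by
            exact mul_le_mul_of_nonneg_left h2' (norm_nonneg g)
        _ = ‖g‖ / c * ‖T U‖ := by ring
    calc c * ‖f‖ ≤ c * (‖g‖ / c) := by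
          exact mul_le_mul_of_nonneg_left hfle hc.le
      _ = ‖g‖ := by field_simp
  · rw [hnorm_eq, hVnorm]
    apply ContinuousLinearMap.opNorm_le_bound _ (mul_nonneg (hc.trans_le hcC).le (norm_nonneg f))
    intro U
    calc ‖g U‖ = ‖f (T U)‖ := rfl
      _ ≤ ‖f‖ * ‖T U‖ := f.le_opNorm _
      _ ≤ ‖f‖ * (C * ‖U‖) := mul_le_mul_of_nonneg_left (hup U) (norm_nonneg f)
      _ = C * ‖f‖ * ‖U‖ := by ring
end
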